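/- Let α be an admissible control with trajectory ξ, and suppose that ξ_i(t) ≥ ξ_j(t) for all t ∈ [0,T] whenever i < j. Let λ : [0,T] → ℝ^N be an absolutely continuous solution of the integral-cost adjoint equations λ̇_i(t) = λ_i(t) − (1/N) ∑_{j=1}^N (1 − α_j(t)) λ_j(t) − 2 ξ_i(t) for almost every t, with terminal condition λ(T) = 0. Then λ_i(t) ≥ λ_j(t) for all t ∈ [0,T] whenever i < j. -/

import Mathlib

open MeasureTheory Real

noncomputable section

/-- An admissible control: measurable, valued in `[0,1]` on `[0,T]` for the agents `1,…,N`,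
with total strength at most `M` at every time of `[0,T]`. -/
def IsAdmissible (N : ℕ) (T M : ℝ) (α : ℝ → ℕ → ℝ) : Prop :=
  (∀ i, Measurable fun t => α t i) ∧
  (∀ t ∈ Set.Icc (0 : ℝ) T, ∀ i ∈ Finset.Icc 1 N, 0 ≤ α t i ∧ α t i ≤ 1) ∧
  (∀ t ∈ Set.Icc (0 : ℝ) T, ∑ i ∈ Finset.Icc 1 N, α t i ≤ M)

/-- A full-strength control: admissible with total strength exactly `1` at every time. -/
def IsFullStrength (N : ℕ) (T : ℝ) (α : ℝ → ℕ → ℝ) : Prop :=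
  IsAdmissible N T 1 α ∧ ∀ t ∈ Set.Icc (0 : ℝ) T, ∑ i ∈ Finset.Icc 1 N, α t i = 1

/-- The mean `ξ̄(s) = (1/N) ∑_{j=1}^N ξ_j(s)` of the state. -/
def xbar (N : ℕ) (ξ : ℝ → ℕ → ℝ) (s : ℝ) : ℝ :=
  (N : ℝ)⁻¹ * ∑ j ∈ Finset.Icc 1 N, ξ s j

/-- The trajectory of a control `α` with initial state `ξ0`. -/
def IsTrajectory (N : ℕ) (T : ℝ) (α : ℝ → ℕ → ℝ) (ξ0 : ℕ → ℝ) (ξ : ℝ → ℕ → ℝ) : Prop :=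
  (∀ i, ContinuousOn (fun t => ξ t i) (Set.Icc 0 T)) ∧
  (∀ t ∈ Set.Icc (0 : ℝ) T, ∀ i ∈ Finset.Icc 1 N,
    ξ t i = ξ0 i + ∫ s in (0 : ℝ)..t, (-(ξ s i) + (1 - α s i) * xbar N ξ s))

/-- The migration functional `𝕍(t) = (1/N) ∑_{i=1}^N ξ_i(t)²`. -/
def migV (N : ℕ) (ξ : ℝ → ℕ → ℝ) (t : ℝ) : ℝ :=
  (N : ℝ)⁻¹ * ∑ i ∈ Finset.Icc 1 N, (ξ t i) ^ 2

/-- The partial mean `ξ̄_{1,l}(t) = (1/l) ∑_{i=1}^l ξ_i(t)`. -/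
def pmean (l : ℕ) (ξ : ℝ → ℕ → ℝ) (t : ℝ) : ℝ :=
  (l : ℝ)⁻¹ * ∑ i ∈ Finset.Icc 1 l, ξ t i

/-- The partial mean `(1/l) ∑_{i=1}^l ξ⁰_i` of the initial state. -/
def pmean0 (l : ℕ) (ξ0 : ℕ → ℝ) : ℝ :=
  (l : ℝ)⁻¹ * ∑ i ∈ Finset.Icc 1 l, ξ0 i

/-- `α` (with trajectory `ξ`) is optimal for the final cost `𝕍(T)` among admissible
controls with the same initial state. -/
def IsOptimalFinal (N : ℕ) (T M : ℝ) (ξ0 : ℕ → ℝ) (α ξ : ℝ → ℕ → ℝ) : Prop :=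
  IsAdmissible N T M α ∧ IsTrajectory N T α ξ0 ξ ∧
  ∀ β η, IsAdmissible N T M β → IsTrajectory N T β ξ0 η → migV N ξ T ≤ migV N η T

/-- An (absolutely continuous) solution of the adjoint equations of the integral-cost
problem, `λ̇_i = λ_i − (1/N) ∑_j (1 − α_j) λ_j − 2 ξ_i` with `λ(T) = 0`, encoded by the
corresponding integral equations. -/
def IsAdjointIntegral (N : ℕ) (T : ℝ) (α ξ lam : ℝ → ℕ → ℝ) : Prop :=
  (∀ i, ContinuousOn (fun t => lam t i) (Set.Icc 0 T)) ∧
  (∀ i ∈ Finset.Icc 1 N, lam T i = 0) ∧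
  (∀ t ∈ Set.Icc (0 : ℝ) T, ∀ i ∈ Finset.Icc 1 N,
    lam t i = lam 0 i + ∫ s in (0 : ℝ)..t,
      (lam s i - (N : ℝ)⁻¹ * (∑ j ∈ Finset.Icc 1 N, (1 - α s j) * lam s j) - 2 * ξ s i))

/-- If the trajectory is ordered on `[0,T]`, then so are the covectors of the
integral-cost adjoint system. -/
theorem integral_adjoint_ordered
    (N : ℕ) (hN : 1 ≤ N) (T M : ℝ) (hT : 0 < T) (hM : 0 < M)
    (α : ℝ → ℕ → ℝ) (ξ0 : ℕ → ℝ) (ξ : ℝ → ℕ → ℝ)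
    (hα : IsAdmissible N T M α) (hξ : IsTrajectory N T α ξ0 ξ)
    (hordξ : ∀ t ∈ Set.Icc (0 : ℝ) T, ∀ i ∈ Finset.Icc 1 N, ∀ j ∈ Finset.Icc 1 N,
      i < j → ξ t j ≤ ξ t i)
    (lam : ℝ → ℕ → ℝ) (hlam : IsAdjointIntegral N T α ξ lam) :
    ∀ t ∈ Set.Icc (0 : ℝ) T, ∀ i ∈ Finset.Icc 1 N, ∀ j ∈ Finset.Icc 1 N,
      i < j → lam t j ≤ lam t i := by
  obtain ⟨hlamc, hlamT, hlameq⟩ := hlam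
  intro t ht i hi j hj hij
  -- difference and its forcing
  set d : ℝ → ℝ := fun s => lam s i - lam s j with hd
  set h : ℝ → ℝ := fun s => d s - 2 * (ξ s i - ξ s j) with hh
  have hT0 : (0 : ℝ) ≤ T := hT.le
  -- continuity of d and h on [0,T]
  have hdcont : ContinuousOn d (Set.Icc 0 T) := (hlamc i).sub (hlamc j)
  have hhcont : ContinuousOn h (Set.Icc 0 T) :=
    hdcont.sub ((continuousOn_const.mul ((hξ.1 i).sub (hξ.1 j))))
  -- the integrand F for index k
  set F : ℕ → ℝ → ℝ := fun k s =>
    lam s k - (N : ℝ)⁻¹ * (∑ m ∈ Finset.Icc 1 N, (1 - α s m) * lam s m) - 2 * ξ s k with hF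
  -- F i - F j = h
  have hFij : ∀ s, F i s - F j s = h s := by
    intro s; simp only [hF, hh, hd]; ring
  -- integrability of F k on [0,t'] for t' ∈ [0,T]
  have hint : ∀ t' ∈ Set.Icc (0 : ℝ) T, ∀ k ∈ Finset.Icc 1 N,
      IntervalIntegrable (F k) MeasureTheory.volume 0 t' := by
    intro t' ht' k hk
    have hsub : Set.uIcc (0 : ℝ) t' ⊆ Set.Icc 0 T := by
      rw [Set.uIcc_of_le ht'.1]
      exact Set.Icc_subset_Icc le_rfl ht'.2
    have hlam_ii : ∀ m, IntervalIntegrable (fun s => lam s m) MeasureTheory.volume 0 t' :=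
      fun m => ((hlamc m).mono hsub).intervalIntegrable
    have hξ_ii : IntervalIntegrable (fun s => 2 * ξ s k) MeasureTheory.volume 0 t' :=
      ((continuousOn_const.mul (hξ.1 k)).mono hsub).intervalIntegrable
    have hsum : IntervalIntegrable
        (fun s => (N : ℝ)⁻¹ * (∑ m ∈ Finset.Icc 1 N, (1 - α s m) * lam s m))
        MeasureTheory.volume 0 t' := by
      refine IntervalIntegrable.const_mul ?_ _
      have : IntervalIntegrable (fun s => ∑ m ∈ Finset.Icc 1 N,
          (1 - α s m) * lam s m) MeasureTheory.volume 0 t' := by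
        have := IntervalIntegrable.sum (μ := MeasureTheory.volume) (Finset.Icc 1 N)
          (f := fun m s => (1 - α s m) * lam s m) (a := 0) (b := t') ?_
        · have heq : (fun s => ∑ m ∈ Finset.Icc 1 N, (1 - α s m) * lam s m)
              = ∑ m ∈ Finset.Icc 1 N, (fun s => (1 - α s m) * lam s m) := by
            funext s; simp
          rw [heq]; exact this
        · intro m hm
          rw [intervalIntegrable_iff_integrableOn_Ioc_of_le ht'.1]
          have hIoc : Set.Ioc (0:ℝ) t' ⊆ Set.Icc 0 T :=
            (Set.Ioc_subset_Icc_self).trans (Set.Icc_subset_Icc le_rfl ht'.2)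
          have hlam_int : MeasureTheory.IntegrableOn (fun s => lam s m)
              (Set.Ioc 0 t') MeasureTheory.volume := by
            have : MeasureTheory.IntegrableOn (fun s => lam s m)
                (Set.Icc 0 t') MeasureTheory.volume :=
              ((hlamc m).mono (Set.Icc_subset_Icc le_rfl ht'.2)).integrableOn_Icc
            exact this.mono_set Set.Ioc_subset_Icc_self
          refine MeasureTheory.Integrable.bdd_mul (c := 1) hlam_int
            ((measurable_const.sub (hα.1 m)).aestronglyMeasurable) ?_
          rw [MeasureTheory.ae_restrict_iff' measurableSet_Ioc]
          filter_upwards with s hs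
          have h01 := hα.2.1 s (hIoc hs) m hm
          rw [Real.norm_eq_abs, abs_le]
          constructor <;> linarith [h01.1, h01.2]
      exact this
    exact ((hlam_ii k).sub hsum).sub hξ_ii
  -- integral identity for d
  have hdeq : ∀ t' ∈ Set.Icc (0 : ℝ) T, d t' = d 0 + ∫ s in (0:ℝ)..t', h s := by
    intro t' ht'
    have ei := hlameq t' ht' i hi
    have ej := hlameq t' ht' j hj
    have : d t' = d 0 + ((∫ s in (0:ℝ)..t', F i s) - ∫ s in (0:ℝ)..t', F j s) := by
      simp only [hd]; rw [ei, ej]; simp only [hF]; ring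
    rw [this, ← intervalIntegral.integral_sub (hint t' ht' i hi) (hint t' ht' j hj)]
    congr 1
    exact intervalIntegral.integral_congr fun s _ => hFij s
  -- clamped extension of h
  set p : ℝ → ℝ := fun s => max 0 (min s T) with hp
  have hpmem : ∀ s, p s ∈ Set.Icc (0 : ℝ) T := by
    intro s
    constructor
    · exact le_max_left _ _
    · exact max_le hT0 (min_le_right _ _)
  have hpcont : Continuous p := continuous_const.max (continuous_id.min continuous_const)
  have hpeq : ∀ s ∈ Set.Icc (0 : ℝ) T, p s = s := by
    intro s hs
    simp only [hp]
    rw [min_eq_left hs.2, max_eq_right hs.1]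
  set htil : ℝ → ℝ := fun s => h (p s) with htildef
  have htilcont : Continuous htil := hhcont.comp_continuous hpcont hpmem
  have htileq : ∀ s ∈ Set.Icc (0 : ℝ) T, htil s = h s := by
    intro s hs; simp only [htildef, hpeq s hs]
  -- D is the nice primitive
  set D : ℝ → ℝ := fun u => d 0 + ∫ s in (0:ℝ)..u, htil s with hDdef
  have hDeq : ∀ t' ∈ Set.Icc (0 : ℝ) T, D t' = d t' := by
    intro t' ht'
    rw [hdeq t' ht']
    simp only [hDdef]
    congr 1
    refine intervalIntegral.integral_congr fun s hs => ?_
    refine htileq s ?_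
    rw [Set.uIcc_of_le ht'.1] at hs
    exact ⟨hs.1, hs.2.trans ht'.2⟩
  have hDderiv : ∀ x : ℝ, HasDerivAt D (htil x) x := by
    intro x
    refine HasDerivAt.const_add _ ?_
    exact intervalIntegral.integral_hasDerivAt_right
      (htilcont.intervalIntegrable _ _)
      htilcont.stronglyMeasurable.stronglyMeasurableAtFilter
      htilcont.continuousAt
  -- the Lyapunov function
  set G : ℝ → ℝ := fun u => Real.exp (-u) * D u with hGdef
  have hGderiv : ∀ x : ℝ, HasDerivAt G (-Real.exp (-x) * D x + Real.exp (-x) * htil x) x := by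
    intro x
    have he : HasDerivAt (fun u : ℝ => Real.exp (-u)) (-Real.exp (-x)) x := by
      have := (Real.hasDerivAt_exp (-x)).comp x ((hasDerivAt_id x).neg)
      exact this.congr_deriv (by ring)
    exact (he.mul (hDderiv x)).congr_deriv (by ring)
  have hGanti : AntitoneOn G (Set.Icc 0 T) := by
    refine antitoneOn_of_deriv_nonpos (convex_Icc 0 T)
      (fun x _ => (hGderiv x).continuousAt.continuousWithinAt)
      (fun x hx => ((hGderiv x).differentiableAt).differentiableWithinAt) ?_
    intro x hx
    rw [interior_Icc] at hx
    have hxI : x ∈ Set.Icc (0:ℝ) T := ⟨hx.1.le, hx.2.le⟩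
    rw [(hGderiv x).deriv]
    have h1 : htil x = h x := htileq x hxI
    have h2 : D x = d x := hDeq x hxI
    rw [h1, h2]
    have : -Real.exp (-x) * d x + Real.exp (-x) * h x
        = Real.exp (-x) * (-2 * (ξ x i - ξ x j)) := by
      simp only [hh]; ring
    rw [this]
    have hxi := hordξ x hxI i hi j hj hij
    have : -2 * (ξ x i - ξ x j) ≤ 0 := by linarith
    exact mul_nonpos_of_nonneg_of_nonpos (Real.exp_nonneg _) this
  -- conclude
  have hTmem : T ∈ Set.Icc (0:ℝ) T := ⟨hT0, le_rfl⟩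
  have hGT : G T = 0 := by
    simp only [hGdef]
    rw [hDeq T hTmem]
    have : d T = 0 := by
      simp only [hd]; rw [hlamT i hi, hlamT j hj]; ring
    rw [this, mul_zero]
  have hle : G T ≤ G t := hGanti ht hTmem ht.2
  rw [hGT] at hle
  have hGt : G t = Real.exp (-t) * d t := by
    simp only [hGdef]; rw [hDeq t ht]
  rw [hGt] at hle
  have hdpos : 0 ≤ d t := nonneg_of_mul_nonneg_right hle (Real.exp_pos _)
  simpa [hd, sub_nonneg] using hdpos

end
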